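/- If m is an even positive integer and a_1,…,a_v are real numbers, then the complete homogeneous symmetric polynomial Σ_m(a_1,…,a_v) is nonnegative, and Σ_m(a_1,…,a_v) = 0 if and only if a_1 = ⋯ = a_v = 0. -/

import Mathlib

open MvPolynomial

open MeasureTheory Real Set
open scoped ENNReal NNReal

/-! ### The exponential measure and its moments -/

noncomputable def HsymmAux.mu1 : Measure ℝ :=
  (volume.restrict (Set.Ioi (0:ℝ))).withDensity fun x => ENNReal.ofReal (Real.exp (-x))

namespace HsymmAux

lemma integrableOn_pow_exp (k : ℕ) :
    IntegrableOn (fun x : ℝ => x ^ k * Real.exp (-x)) (Set.Ioi 0) := by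
  have h := Real.GammaIntegral_convergent (s := (k + 1 : ℝ)) (by positivity)
  refine h.congr_fun ?_ measurableSet_Ioi
  intro x hx
  simp only
  rw [add_sub_cancel_right, Real.rpow_natCast, mul_comm]

lemma mu1_integrable_pow (k : ℕ) : Integrable (fun x : ℝ => x ^ k) mu1 := by
  rw [mu1, integrable_withDensity_iff (by fun_prop) (by simp [ENNReal.ofReal_lt_top])]
  refine (integrableOn_pow_exp k).congr_fun ?_ measurableSet_Ioi
  intro x _
  simp [ENNReal.toReal_ofReal (Real.exp_nonneg (-x))]

lemma mu1_moment (k : ℕ) : ∫ x, x ^ k ∂mu1 = (Nat.factorial k : ℝ) := by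
  rw [mu1]
  rw [show (fun x : ℝ => ENNReal.ofReal (Real.exp (-x)))
      = fun x : ℝ => ((Real.exp (-x)).toNNReal : ℝ≥0∞) from rfl]
  rw [integral_withDensity_eq_integral_smul (by fun_prop) _]
  have h : ∀ x ∈ Set.Ioi (0:ℝ),
      (Real.exp (-x)).toNNReal • (x ^ k) = Real.exp (-x) * x ^ ((k+1:ℝ) - 1) := by
    intro x hx
    rw [NNReal.smul_def, Real.coe_toNNReal _ (Real.exp_nonneg _), smul_eq_mul,
      add_sub_cancel_right, Real.rpow_natCast]
  rw [setIntegral_congr_fun measurableSet_Ioi h, ← Real.Gamma_eq_integral (by positivity),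
    Real.Gamma_nat_eq_factorial]

instance : IsProbabilityMeasure mu1 := by
  constructor
  rw [mu1, withDensity_apply _ MeasurableSet.univ, Measure.restrict_univ]
  have hint : IntegrableOn (fun x : ℝ => Real.exp (-x)) (Set.Ioi 0) := by
    have h := exp_neg_integrableOn_Ioi (0:ℝ) one_pos
    simpa using h
  rw [← ofReal_integral_eq_lintegral_ofReal hint
    (Filter.Eventually.of_forall fun x => (Real.exp_nonneg _))]
  simp [integral_exp_neg_Ioi_zero, integral_exp_Iic_zero]

lemma mu1_Ioo_pos {p q : ℝ} (hp : 0 ≤ p) (hpq : p < q) : 0 < mu1 (Set.Ioo p q) := by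
  rw [mu1, withDensity_apply _ measurableSet_Ioo, Measure.restrict_restrict measurableSet_Ioo]
  have hsub : Set.Ioo p q ∩ Set.Ioi 0 = Set.Ioo p q :=
    Set.inter_eq_left.mpr fun x hx => lt_of_le_of_lt hp hx.1
  rw [hsub]
  calc (0:ℝ≥0∞) < ENNReal.ofReal (Real.exp (-q)) * volume (Set.Ioo p q) := by
        rw [Real.volume_Ioo]
        exact ENNReal.mul_pos (ENNReal.ofReal_pos.mpr (Real.exp_pos _)).ne'
          (ENNReal.ofReal_pos.mpr (by linarith)).ne'
    _ = ∫⁻ _ in Set.Ioo p q, ENNReal.ofReal (Real.exp (-q)) ∂volume := by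
        rw [setLIntegral_const]
    _ ≤ ∫⁻ x in Set.Ioo p q, ENNReal.ofReal (Real.exp (-x)) ∂volume := by
        refine setLIntegral_mono (by fun_prop) fun x hx => ?_
        exact ENNReal.ofReal_le_ofReal (Real.exp_le_exp.mpr (by linarith [hx.2]))

end HsymmAux

/-- A type synonym for `ℝ` carrying the exponential measure as its volume. -/
def HsymmAux.ERe : Type := ℝ

namespace HsymmAux

instance : MeasurableSpace ERe := inferInstanceAs (MeasurableSpace ℝ)
noncomputable instance : MeasureSpace ERe := ⟨mu1⟩
instance : IsProbabilityMeasure (volume : Measure ERe) :=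
  inferInstanceAs (IsProbabilityMeasure mu1)
instance : SigmaFinite (volume : Measure ERe) := inferInstance

def toR : ERe → ℝ := id

/-! ### Combinatorial identities -/

noncomputable def cnt {v m : ℕ} (s : Sym (Fin v) m) (i : Fin v) : ℕ := Multiset.count i s.1

variable {v m : ℕ}

lemma count_prod {M : Type*} [CommMonoid M] (s : Sym (Fin v) m) (f : Fin v → M) :
    (s.1.map f).prod = ∏ i, f i ^ cnt s i := by
  classical
  rw [Finset.prod_multiset_map_count]
  refine Finset.prod_subset (Finset.subset_univ _) fun i _ hi => ?_
  rw [Multiset.mem_toFinset] at hi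
  rw [Multiset.count_eq_zero_of_notMem hi, pow_zero]

lemma eval_hsymm (a : Fin v → ℝ) :
    eval a (hsymm (Fin v) ℝ m) = ∑ s : Sym (Fin v) m, ∏ i, a i ^ cnt s i := by
  rw [hsymm, map_sum]
  refine Finset.sum_congr rfl fun s _ => ?_
  rw [← count_prod s a, map_multiset_prod, Multiset.map_map]
  simp

lemma fact_spec (s : Sym (Fin v) m) :
    (∏ i, Nat.factorial (cnt s i)) * Multiset.countPerms s.1 = Nat.factorial m := by
  classical
  have h1 : Multiset.countPerms s.1
      = Nat.multinomial s.1.toFinset (fun i => Multiset.count i s.1) := by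
    rw [Multiset.countPerms, Finsupp.multinomial_eq, Multiset.toFinsupp_support]
    exact Nat.multinomial_congr fun i _ => by simp
  have h2 : (∏ i ∈ s.1.toFinset, Nat.factorial (Multiset.count i s.1)) *
      Nat.multinomial s.1.toFinset (fun i => Multiset.count i s.1)
      = (∑ i ∈ s.1.toFinset, Multiset.count i s.1).factorial :=
    Nat.multinomial_spec _ _
  rw [h1]
  have h3 : (∏ i, Nat.factorial (cnt s i))
      = ∏ i ∈ s.1.toFinset, Nat.factorial (Multiset.count i s.1) := by
    refine (Finset.prod_subset (Finset.subset_univ _) fun i _ hi => ?_).symm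
    rw [Multiset.mem_toFinset] at hi
    rw [show cnt s i = Multiset.count i s.1 from rfl,
      Multiset.count_eq_zero_of_notMem hi, Nat.factorial_zero]
  rw [h3, h2, Multiset.toFinset_sum_count_eq, s.2]

lemma expand (a z : Fin v → ℝ) :
    (∑ i, a i * z i) ^ m = ∑ s : Sym (Fin v) m,
      (Multiset.countPerms s.1 : ℝ) * ((∏ i, a i ^ cnt s i) * ∏ i, z i ^ cnt s i) := by
  classical
  rw [Finset.sum_pow, Finset.sym_univ]
  refine Finset.sum_congr rfl fun s _ => ?_
  rw [count_prod s (fun i => a i * z i)]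
  simp_rw [mul_pow]
  rw [Finset.prod_mul_distrib]

/-! ### The key integral identity -/

lemma integrable_term (a : Fin v → ℝ) (s : Sym (Fin v) m) :
    Integrable (fun z : Fin v → ERe =>
      (Multiset.countPerms s.1 : ℝ) * ((∏ i, a i ^ cnt s i) * ∏ i, toR (z i) ^ cnt s i)) := by
  refine (Integrable.const_mul ?_ _).const_mul _
  exact Integrable.fintype_prod (f := fun i (y : ERe) => toR y ^ cnt s i)
    (fun i => mu1_integrable_pow (cnt s i))

lemma integrable_pow_sum (a : Fin v → ℝ) :
    Integrable (fun z : Fin v → ERe => (∑ i, a i * toR (z i)) ^ m) := by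
  have h : (fun z : Fin v → ERe => (∑ i, a i * toR (z i)) ^ m)
      = fun z : Fin v → ERe => ∑ s : Sym (Fin v) m,
        (Multiset.countPerms s.1 : ℝ) * ((∏ i, a i ^ cnt s i) * ∏ i, toR (z i) ^ cnt s i) := by
    funext z
    exact expand a (fun i => toR (z i))
  rw [h]
  exact integrable_finset_sum _ fun s _ => integrable_term a s

lemma key (a : Fin v → ℝ) :
    ∫ z : Fin v → ERe, (∑ i, a i * toR (z i)) ^ m
      = (Nat.factorial m : ℝ) * eval a (hsymm (Fin v) ℝ m) := by
  have h : ∀ z : Fin v → ERe, (∑ i, a i * toR (z i)) ^ m = ∑ s : Sym (Fin v) m,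
      (Multiset.countPerms s.1 : ℝ) * ((∏ i, a i ^ cnt s i) * ∏ i, toR (z i) ^ cnt s i) :=
    fun z => expand a (fun i => toR (z i))
  calc ∫ z : Fin v → ERe, (∑ i, a i * toR (z i)) ^ m
      = ∫ z : Fin v → ERe, ∑ s : Sym (Fin v) m,
        (Multiset.countPerms s.1 : ℝ) * ((∏ i, a i ^ cnt s i) * ∏ i, toR (z i) ^ cnt s i) := by
        congr 1; funext z; exact h z
    _ = ∑ s : Sym (Fin v) m, ∫ z : Fin v → ERe,
        (Multiset.countPerms s.1 : ℝ) * ((∏ i, a i ^ cnt s i) * ∏ i, toR (z i) ^ cnt s i) :=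
        integral_finset_sum _ fun s _ => integrable_term a s
    _ = ∑ s : Sym (Fin v) m, (Multiset.countPerms s.1 : ℝ) *
        ((∏ i, a i ^ cnt s i) * ∏ i, (Nat.factorial (cnt s i) : ℝ)) := by
        refine Finset.sum_congr rfl fun s _ => ?_
        rw [integral_const_mul, integral_const_mul,
          integral_fintype_prod_volume_eq_prod (f := fun i (y : ERe) => toR y ^ cnt s i)]
        congr 2
        exact Finset.prod_congr rfl fun i _ => mu1_moment (cnt s i)
    _ = ∑ s : Sym (Fin v) m, (Nat.factorial m : ℝ) * ∏ i, a i ^ cnt s i := by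
        refine Finset.sum_congr rfl fun s _ => ?_
        have hc : ((∏ i, Nat.factorial (cnt s i)) * Multiset.countPerms s.1 : ℝ)
            = (Nat.factorial m : ℝ) := by
          rw_mod_cast [fact_spec s]
        push_cast at hc
        calc (Multiset.countPerms s.1 : ℝ) *
            ((∏ i, a i ^ cnt s i) * ∏ i, (Nat.factorial (cnt s i) : ℝ))
            = ((∏ i, (Nat.factorial (cnt s i) : ℝ)) * (Multiset.countPerms s.1 : ℝ))
              * ∏ i, a i ^ cnt s i := by ring
          _ = (Nat.factorial m : ℝ) * ∏ i, a i ^ cnt s i := by rw [hc]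
    _ = (Nat.factorial m : ℝ) * eval a (hsymm (Fin v) ℝ m) := by
        rw [eval_hsymm, Finset.mul_sum]

end HsymmAux

namespace HsymmAux
lemma measurable_toR : Measurable toR := fun _ hs => hs
end HsymmAux

open HsymmAux

/-- For `m` even and positive, the complete homogeneous symmetric polynomial of degree `m`
evaluated at real numbers is nonnegative, and vanishes iff all arguments vanish. -/
theorem hsymm_even_nonneg (m v : ℕ) (hm : Even m) (hm0 : 0 < m) (hv : 1 ≤ v)
    (a : Fin v → ℝ) :
    0 ≤ eval a (hsymm (Fin v) ℝ m) ∧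
      (eval a (hsymm (Fin v) ℝ m) = 0 ↔ ∀ i, a i = 0) := by
  classical
  have hkey := HsymmAux.key (m := m) a
  have hfact : (0:ℝ) < (Nat.factorial m : ℝ) := by positivity
  have hnonnegf : ∀ z : Fin v → ERe, 0 ≤ (∑ i, a i * toR (z i)) ^ m :=
    fun z => hm.pow_nonneg _
  have hintnonneg : 0 ≤ ∫ z : Fin v → ERe, (∑ i, a i * toR (z i)) ^ m :=
    integral_nonneg hnonnegf
  have hnn : 0 ≤ eval a (hsymm (Fin v) ℝ m) := by
    rw [hkey] at hintnonneg
    nlinarith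
  refine ⟨hnn, ?_, ?_⟩
  · -- eval = 0 → a = 0
    intro h0 j
    by_contra hj
    obtain ⟨t, ht0, htL⟩ : ∃ t : ℝ, 0 < t ∧ (∑ i, a i) + t * a j ≠ 0 := by
      by_cases hc : (∑ i, a i) + a j = 0
      · exact ⟨2, two_pos, by intro h; apply hj; linarith⟩
      · exact ⟨1, one_pos, by simpa using hc⟩
    set zs : Fin v → ℝ := fun i => if i = j then 1 + t else 1 with hzs
    have hLstar : (∑ i, a i * zs i) = (∑ i, a i) + t * a j := by
      have h1 : ∀ i, a i * zs i = a i + (if i = j then a i * t else 0) := by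
        intro i
        by_cases h : i = j <;> simp [hzs, h] <;> ring
      simp_rw [h1]
      rw [Finset.sum_add_distrib, Finset.sum_ite_eq' Finset.univ j]
      simp [mul_comm]
    set L : ℝ := (∑ i, a i) + t * a j with hL
    have hr : 0 < |L| := abs_pos.mpr htL
    set A : ℝ := ∑ i, |a i| with hA
    have hA0 : 0 ≤ A := Finset.sum_nonneg fun i _ => abs_nonneg _
    set δ : ℝ := min (1/2) (|L| / (2 * (A + 1))) with hδ
    have hδ0 : 0 < δ := lt_min (by norm_num) (by positivity)
    have hδhalf : δ ≤ 1/2 := min_le_left _ _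
    have hδ2 : δ ≤ |L| / (2 * (A + 1)) := min_le_right _ _
    have hbound : ∀ w : Fin v → ℝ, (∀ i, |w i - zs i| ≤ δ) → |L| / 2 ≤ |∑ i, a i * w i| := by
      intro w hw
      have hdiff : |(∑ i, a i * w i) - L| ≤ A * δ := by
        rw [← hLstar, ← Finset.sum_sub_distrib]
        calc |∑ i, (a i * w i - a i * zs i)| ≤ ∑ i, |a i * w i - a i * zs i| :=
              Finset.abs_sum_le_sum_abs _ _
          _ ≤ ∑ i, |a i| * δ := by
              refine Finset.sum_le_sum fun i _ => ?_
              rw [← mul_sub, abs_mul]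
              exact mul_le_mul_of_nonneg_left (hw i) (abs_nonneg _)
          _ = A * δ := by rw [hA, Finset.sum_mul]
      have hAδ : A * δ ≤ |L| / 2 := by
        have h1 : A * δ ≤ A * (|L| / (2 * (A + 1))) :=
          mul_le_mul_of_nonneg_left hδ2 hA0
        have h2 : A * (|L| / (2 * (A + 1))) ≤ |L| / 2 := by
          rw [mul_div_assoc']
          rw [div_le_div_iff₀ (by positivity) (by norm_num)]
          nlinarith [abs_nonneg L]
        linarith
      have h4 := abs_sub_abs_le_abs_sub L (∑ i, a i * w i)
      have h3 : |L - (∑ i, a i * w i)| = |(∑ i, a i * w i) - L| := abs_sub_comm _ _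
      linarith
    set B : Set (Fin v → ERe) :=
      Set.univ.pi (fun i => toR ⁻¹' (Set.Ioo (zs i - δ) (zs i + δ))) with hB
    have hBmeas : MeasurableSet B :=
      MeasurableSet.univ_pi fun i => measurable_toR measurableSet_Ioo
    have hzs1 : ∀ i, 1 ≤ zs i := by
      intro i
      by_cases h : i = j <;> simp [hzs, h] <;> linarith
    have hfac : ∀ i : Fin v,
        (volume : Measure ERe) (toR ⁻¹' (Set.Ioo (zs i - δ) (zs i + δ)))
          = mu1 (Set.Ioo (zs i - δ) (zs i + δ)) := fun i => rfl
    have hμB : 0 < volume B := by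
      rw [hB, volume_pi_pi]
      rw [show (fun i : Fin v => (volume : Measure ERe)
          (toR ⁻¹' (Set.Ioo (zs i - δ) (zs i + δ))))
        = fun i : Fin v => mu1 (Set.Ioo (zs i - δ) (zs i + δ)) from rfl]
      refine CanonicallyOrderedAdd.prod_pos.mpr fun i _ => ?_
      refine mu1_Ioo_pos ?_ (by linarith [hδ0])
      have := hzs1 i
      linarith
    haveI : IsProbabilityMeasure (volume : Measure (Fin v → ERe)) :=
      inferInstance
    have hμBfin : volume B ≠ ⊤ := measure_ne_top _ _
    have hfB : ∀ z ∈ B, (|L|/2) ^ m ≤ (∑ i, a i * toR (z i)) ^ m := by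
      intro z hz
      have hw : ∀ i, |toR (z i) - zs i| ≤ δ := by
        intro i
        have h5 := hz i (Set.mem_univ i)
        rw [Set.mem_preimage, Set.mem_Ioo] at h5
        rw [abs_le]
        constructor <;> linarith [h5.1, h5.2]
      have hb := hbound (fun i => toR (z i)) hw
      calc (|L|/2) ^ m ≤ |∑ i, a i * toR (z i)| ^ m :=
            pow_le_pow_left₀ (by positivity) hb m
        _ = |(∑ i, a i * toR (z i)) ^ m| := (abs_pow _ m).symm
        _ = (∑ i, a i * toR (z i)) ^ m := abs_of_nonneg (hnonnegf z)
    have h1 : ∫ z in B, (∑ i, a i * toR (z i)) ^ m ≤ ∫ z : Fin v → ERe, (∑ i, a i * toR (z i)) ^ m :=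
      setIntegral_le_integral (integrable_pow_sum a) (Filter.Eventually.of_forall hnonnegf)
    have h2 : (|L|/2) ^ m * (volume B).toReal ≤ ∫ z in B, (∑ i, a i * toR (z i)) ^ m :=
      setIntegral_ge_of_const_le_real hBmeas hμBfin hfB (integrable_pow_sum a).integrableOn
    have hpos : 0 < (|L|/2) ^ m * (volume B).toReal := by
      have := ENNReal.toReal_pos hμB.ne' hμBfin
      positivity
    rw [hkey, h0, mul_zero] at h1
    linarith
  · intro hall
    rw [HsymmAux.eval_hsymm]
    refine Finset.sum_eq_zero fun s _ => ?_
    have hne : s.1 ≠ 0 := by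
      intro h
      have h6 := s.2
      rw [h] at h6
      simp at h6
      omega
    obtain ⟨i, hi⟩ := Multiset.exists_mem_of_ne_zero hne
    refine Finset.prod_eq_zero (Finset.mem_univ i) ?_
    rw [hall i, zero_pow]
    exact (Multiset.count_pos.mpr hi).ne'
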